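/- Every nontrivial element of the subgroup of PGL_3(C) generated by the images of the permutation matrix A (e_1↦e_2↦e_3↦e_1) and B = diag(1, w, w^2), where w = e^{2πi/3}, has a matrix representative with 3 distinct eigenvalues. -/
import Mathlib


open Matrix

/-- `PGL₃(ℂ) = GL₃(ℂ)` modulo its center (the scalars). -/
abbrev PGL3 : Type := GL (Fin 3) ℂ ⧸ Subgroup.center (GL (Fin 3) ℂ)

/-- The projection `GL₃(ℂ) → PGL₃(ℂ)`. -/
noncomputable abbrev pgl3mk : GL (Fin 3) ℂ →* PGL3 :=
  QuotientGroup.mk' (Subgroup.center (GL (Fin 3) ℂ))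

lemma eig_of (M : Matrix (Fin 3) (Fin 3) ℂ) (μ : ℂ) (v : Fin 3 → ℂ) (k : Fin 3) (hvk : v k = 1)
    (h : M *ᵥ v = μ • v) : Module.End.HasEigenvalue M.mulVecLin μ :=
  Module.End.hasEigenvalue_of_hasEigenvector ⟨Module.End.mem_eigenspace_iff.mpr
    (by rw [Matrix.mulVecLin_apply, h]), fun h0 => one_ne_zero (α := ℂ) (by simp [h0] at hvk)⟩

lemma cyc1 (p q μ : ℂ) (hpq : p*q = 1) (hμ : μ^3 = 1) :
    (!![0,0,p;1,0,0;0,q,0] : Matrix (Fin 3) (Fin 3) ℂ) *ᵥ ![1, μ^2, q*μ] = μ • ![1, μ^2, q*μ] := by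
  funext k; fin_cases k <;>
    simp [Matrix.mulVec, dotProduct, Fin.sum_univ_three] <;>
    first | ring1 | linear_combination μ*hpq | linear_combination -hμ

lemma cyc2 (p q μ : ℂ) (hpq : p*q = 1) (hμ : μ^3 = 1) :
    (!![0,p,0;0,0,q;1,0,0] : Matrix (Fin 3) (Fin 3) ℂ) *ᵥ ![1, q*μ, μ^2] = μ • ![1, q*μ, μ^2] := by
  funext k; fin_cases k <;>
    simp [Matrix.mulVec, dotProduct, Fin.sum_univ_three] <;>
    first | ring1 | linear_combination μ*hpq | linear_combination -hμ

lemma diag1 (a b c : ℂ) :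
    (!![a,0,0;0,b,0;0,0,c] : Matrix (Fin 3) (Fin 3) ℂ) *ᵥ ![1,0,0] = a • ![1,0,0] := by
  funext k; fin_cases k <;> simp [Matrix.mulVec, dotProduct, Fin.sum_univ_three]

lemma diag2 (a b c : ℂ) :
    (!![a,0,0;0,b,0;0,0,c] : Matrix (Fin 3) (Fin 3) ℂ) *ᵥ ![0,1,0] = b • ![0,1,0] := by
  funext k; fin_cases k <;> simp [Matrix.mulVec, dotProduct, Fin.sum_univ_three]

lemma diag3 (a b c : ℂ) :
    (!![a,0,0;0,b,0;0,0,c] : Matrix (Fin 3) (Fin 3) ℂ) *ᵥ ![0,0,1] = c • ![0,0,1] := by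
  funext k; fin_cases k <;> simp [Matrix.mulVec, dotProduct, Fin.sum_univ_three]

/-- Every nontrivial element of the subgroup of `PGL₃(ℂ)` generated by the images of the
cyclic permutation matrix `A` and `B = diag(1, w, w²)`, `w = e^{2πi/3}`, has a matrix
representative with 3 distinct eigenvalues. -/
theorem stmt6 (w : ℂ) (hw : w = Complex.exp (2 * Real.pi * Complex.I / 3))
    (A B : GL (Fin 3) ℂ)
    (hA : (A : Matrix (Fin 3) (Fin 3) ℂ) = !![0,0,1; 1,0,0; 0,1,0])
    (hB : (B : Matrix (Fin 3) (Fin 3) ℂ) = !![1,0,0; 0,w,0; 0,0,w^2])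
    (g : PGL3) (hg : g ∈ Subgroup.closure {pgl3mk A, pgl3mk B}) (hg1 : g ≠ 1) :
    ∃ M : GL (Fin 3) ℂ, pgl3mk M = g ∧
      ∃ a b c : ℂ, a ≠ b ∧ a ≠ c ∧ b ≠ c ∧
        Module.End.HasEigenvalue (Matrix.mulVecLin (M : Matrix (Fin 3) (Fin 3) ℂ)) a ∧
        Module.End.HasEigenvalue (Matrix.mulVecLin (M : Matrix (Fin 3) (Fin 3) ℂ)) b ∧
        Module.End.HasEigenvalue (Matrix.mulVecLin (M : Matrix (Fin 3) (Fin 3) ℂ)) c := by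
  -- basic facts about `w`
  have hw3 : w ^ 3 = 1 := by
    rw [hw, ← Complex.exp_nat_mul]
    rw [show (3:ℕ) * (2 * Real.pi * Complex.I / 3) = 2 * Real.pi * Complex.I by push_cast; ring]
    simpa using Complex.exp_int_mul_two_pi_mul_I 1
  have hw1 : w ≠ 1 := by
    rw [hw, Ne, Complex.exp_eq_one_iff]
    rintro ⟨n, hn⟩
    have hpi : (Real.pi : ℂ) ≠ 0 := by exact_mod_cast Real.pi_ne_zero
    have h2 : ((3:ℂ) * n - 1) * (2 * Real.pi * Complex.I) = 0 := by
      linear_combination -3 * hn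
    rcases mul_eq_zero.mp h2 with h | h
    · have : ((3 * n : ℤ) : ℂ) = ((1:ℤ):ℂ) := by push_cast; linear_combination h
      have := Int.cast_injective (α := ℂ) this
      omega
    · simp [hpi, Complex.I_ne_zero] at h
  have hw2 : w ^ 2 ≠ 1 := by
    intro h
    exact hw1 (by calc w = w * w^2 := by rw [h, mul_one]
                      _ = w^3 := by ring
                      _ = 1 := hw3)
  have hww2 : w ≠ w ^ 2 := by
    intro h
    apply hw2
    calc w^2 = w * w := by ring
      _ = w * w^2 := by nth_rewrite 2 [h]; ring
      _ = w^3 := by ring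
      _ = 1 := hw3
  have h1w : (1:ℂ) ≠ w := Ne.symm hw1
  have h1w2 : (1:ℂ) ≠ w^2 := Ne.symm hw2
  have hw23 : (w^2) ^ 3 = 1 := by rw [← pow_mul, show 2*3 = 3*2 by ring, pow_mul, hw3, one_pow]
  -- orders of A and B
  have hA3 : A ^ 3 = 1 := by
    ext : 1
    simp only [Units.val_pow_eq_pow_val, hA, Units.val_one, Matrix.one_fin_three]
    norm_num [pow_succ, Matrix.mul_fin_three]
  have hB3 : B ^ 3 = 1 := by
    have h1 : w*w*w = 1 := by linear_combination hw3
    have h2 : w*w*(w*w)*(w*w) = 1 := by linear_combination (w^3+1)*hw3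
    ext : 1
    simp only [Units.val_pow_eq_pow_val, hB, Units.val_one, Matrix.one_fin_three]
    norm_num [pow_succ, Matrix.mul_fin_three, h1, h2]
  -- commutation in PGL3
  have hZprod : (w • (1 : Matrix (Fin 3) (Fin 3) ℂ)) * (w^2 • 1) = 1 := by
    rw [Matrix.smul_mul, Matrix.mul_smul, smul_smul, one_mul]
    rw [show w * w^2 = 1 by linear_combination hw3, one_smul]
  have hZprod' : (w^2 • (1 : Matrix (Fin 3) (Fin 3) ℂ)) * (w • 1) = 1 := by
    rw [Matrix.smul_mul, Matrix.mul_smul, smul_smul, one_mul]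
    rw [show w^2 * w = 1 by linear_combination hw3, one_smul]
  set Z : GL (Fin 3) ℂ := ⟨w • 1, w^2 • 1, hZprod, hZprod'⟩ with hZ
  have hZc : Z ∈ Subgroup.center (GL (Fin 3) ℂ) := by
    rw [Subgroup.mem_center_iff]
    intro x
    ext : 1
    show (x : Matrix (Fin 3) (Fin 3) ℂ) * (w • 1) = (w • 1) * x
    rw [Matrix.mul_smul, Matrix.smul_mul, mul_one, one_mul]
  have hZ1 : pgl3mk Z = 1 := by
    rwa [QuotientGroup.mk'_apply, QuotientGroup.eq_one_iff]
  have hBA : B * A = Z * (A * B) := by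
    ext : 1
    show (B : Matrix (Fin 3) (Fin 3) ℂ) * A = (w • 1) * ((A : Matrix (Fin 3) (Fin 3) ℂ) * B)
    rw [hA, hB, Matrix.smul_mul, one_mul]
    norm_num [Matrix.mul_fin_three, show w * w^2 = 1 from by linear_combination hw3,
      show w * w = w^2 from (sq w).symm]
  have hcomm : Commute (pgl3mk B) (pgl3mk A) := by
    show pgl3mk B * pgl3mk A = pgl3mk A * pgl3mk B
    rw [← _root_.map_mul, ← _root_.map_mul, hBA, _root_.map_mul, hZ1, one_mul]
  have ha3 : (pgl3mk A) ^ 3 = 1 := by rw [← map_pow, hA3, _root_.map_one]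
  have hb3 : (pgl3mk B) ^ 3 = 1 := by rw [← map_pow, hB3, _root_.map_one]
  -- every element of the closure is of the form  a^i b^j
  have hrep : ∃ i j : ℕ, i < 3 ∧ j < 3 ∧ g = pgl3mk A ^ i * pgl3mk B ^ j := by
    have main : ∃ i j : ℕ, g = pgl3mk A ^ i * pgl3mk B ^ j := by
      clear hg1
      induction hg using Subgroup.closure_induction with
      | mem x hx =>
        rcases hx with rfl | rfl
        · exact ⟨1, 0, by rw [pow_one, pow_zero, mul_one]⟩
        · exact ⟨0, 1, by rw [pow_zero, pow_one, one_mul]⟩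
      | one => exact ⟨0, 0, by rw [pow_zero, pow_zero, one_mul]⟩
      | mul x y hx hy ihx ihy =>
        obtain ⟨i, j, rfl⟩ := ihx
        obtain ⟨k, l, rfl⟩ := ihy
        refine ⟨i + k, j + l, ?_⟩
        rw [pow_add, pow_add, (hcomm.pow_pow j k).mul_mul_mul_comm]
      | inv x hx ihx =>
        obtain ⟨i, j, rfl⟩ := ihx
        refine ⟨2*i, 2*j, ?_⟩
        have hAi : (pgl3mk A ^ i)⁻¹ = pgl3mk A ^ (2*i) :=
          inv_eq_of_mul_eq_one_right (by
            rw [← pow_add, show i + 2*i = 3*i by ring, pow_mul, ha3, one_pow])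
        have hBj : (pgl3mk B ^ j)⁻¹ = pgl3mk B ^ (2*j) :=
          inv_eq_of_mul_eq_one_right (by
            rw [← pow_add, show j + 2*j = 3*j by ring, pow_mul, hb3, one_pow])
        rw [_root_.mul_inv_rev, hAi, hBj, (hcomm.pow_pow (2*j) (2*i)).eq]
    obtain ⟨i, j, rfl⟩ := main
    exact ⟨i % 3, j % 3, Nat.mod_lt _ (by norm_num), Nat.mod_lt _ (by norm_num),
      by rw [pow_eq_pow_mod i ha3, pow_eq_pow_mod j hb3]⟩
  obtain ⟨i, j, hi, hj, rfl⟩ := hrep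
  -- matrix values of the eight candidates
  have hA2 : ((A^2 : GL (Fin 3) ℂ) : Matrix (Fin 3) (Fin 3) ℂ) = !![0,1,0;0,0,1;1,0,0] := by
    simp only [Units.val_pow_eq_pow_val, hA]
    norm_num [pow_succ, Matrix.mul_fin_three]
  have hB2 : ((B^2 : GL (Fin 3) ℂ) : Matrix (Fin 3) (Fin 3) ℂ) = !![1,0,0;0,w^2,0;0,0,w] := by
    have hv : ((B^2 : GL (Fin 3) ℂ) : Matrix (Fin 3) (Fin 3) ℂ) = B.val * B.val := by
      rw [Units.val_pow_eq_pow_val, sq]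
    rw [hv, hB, show w^2 = w*w by ring]
    norm_num [Matrix.mul_fin_three]
    rw [show w*w*(w*w) = w*w^3 by ring, hw3, mul_one]
  have hAB : ((A*B : GL (Fin 3) ℂ) : Matrix (Fin 3) (Fin 3) ℂ) = !![0,0,w^2;1,0,0;0,w,0] := by
    simp only [Units.val_mul, hA, hB]
    norm_num [Matrix.mul_fin_three]
  have hAB2 : ((A*B^2 : GL (Fin 3) ℂ) : Matrix (Fin 3) (Fin 3) ℂ) = !![0,0,w;1,0,0;0,w^2,0] := by
    simp only [Units.val_mul, hA, hB2]
    norm_num [Matrix.mul_fin_three]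
  have hA2B : ((A^2*B : GL (Fin 3) ℂ) : Matrix (Fin 3) (Fin 3) ℂ) = !![0,w,0;0,0,w^2;1,0,0] := by
    simp only [Units.val_mul, hA2, hB]
    norm_num [Matrix.mul_fin_three]
  have hA2B2 : ((A^2*B^2 : GL (Fin 3) ℂ) : Matrix (Fin 3) (Fin 3) ℂ) = !![0,w^2,0;0,0,w;1,0,0] := by
    simp only [Units.val_mul, hA2, hB2]
    norm_num [Matrix.mul_fin_three]
  have hq1 : w * w^2 = 1 := by linear_combination hw3
  have hq2 : w^2 * w = 1 := by linear_combination hw3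
  have hone3 : (1:ℂ)^3 = 1 := one_pow 3
  interval_cases i <;> interval_cases j
  -- (0,0): contradiction
  · exact absurd (by rw [pow_zero, pow_zero, one_mul]) hg1
  -- (0,1): B
  · refine ⟨B, by rw [pow_zero, pow_one, one_mul], 1, w, w^2, h1w, h1w2, hww2, ?_, ?_, ?_⟩
    · exact eig_of _ _ _ 0 rfl (by rw [hB]; exact diag1 1 w (w^2))
    · exact eig_of _ _ _ 1 rfl (by rw [hB]; exact diag2 1 w (w^2))
    · exact eig_of _ _ _ 2 rfl (by rw [hB]; exact diag3 1 w (w^2))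
  -- (0,2): B^2
  · refine ⟨B^2, by rw [map_pow, pow_zero, one_mul], 1, w, w^2, h1w, h1w2, hww2, ?_, ?_, ?_⟩
    · exact eig_of _ _ _ 0 rfl (by rw [hB2]; exact diag1 1 (w^2) w)
    · exact eig_of _ _ _ 2 rfl (by rw [hB2]; exact diag3 1 (w^2) w)
    · exact eig_of _ _ _ 1 rfl (by rw [hB2]; exact diag2 1 (w^2) w)
  -- (1,0): A
  · refine ⟨A, by rw [pow_zero, pow_one, mul_one], 1, w, w^2, h1w, h1w2, hww2, ?_, ?_, ?_⟩
    · exact eig_of _ _ ![1, 1^2, 1*1] 0 rfl (by rw [hA]; exact cyc1 1 1 1 (by ring) hone3)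
    · exact eig_of _ _ ![1, w^2, 1*w] 0 rfl (by rw [hA]; exact cyc1 1 1 w (by ring) hw3)
    · exact eig_of _ _ ![1, (w^2)^2, 1*w^2] 0 rfl (by rw [hA]; exact cyc1 1 1 (w^2) (by ring) hw23)
  -- (1,1): A*B
  · refine ⟨A*B, by rw [_root_.map_mul, pow_one, pow_one], 1, w, w^2, h1w, h1w2, hww2, ?_, ?_, ?_⟩
    · exact eig_of _ _ ![1, 1^2, w*1] 0 rfl (by rw [hAB]; exact cyc1 (w^2) w 1 hq2 hone3)
    · exact eig_of _ _ ![1, w^2, w*w] 0 rfl (by rw [hAB]; exact cyc1 (w^2) w w hq2 hw3)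
    · exact eig_of _ _ ![1, (w^2)^2, w*w^2] 0 rfl (by rw [hAB]; exact cyc1 (w^2) w (w^2) hq2 hw23)
  -- (1,2): A*B^2
  · refine ⟨A*B^2, by rw [_root_.map_mul, map_pow, pow_one], 1, w, w^2, h1w, h1w2, hww2, ?_, ?_, ?_⟩
    · exact eig_of _ _ ![1, 1^2, w^2*1] 0 rfl (by rw [hAB2]; exact cyc1 w (w^2) 1 hq1 hone3)
    · exact eig_of _ _ ![1, w^2, w^2*w] 0 rfl (by rw [hAB2]; exact cyc1 w (w^2) w hq1 hw3)
    · exact eig_of _ _ ![1, (w^2)^2, w^2*w^2] 0 rfl (by rw [hAB2]; exact cyc1 w (w^2) (w^2) hq1 hw23)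
  -- (2,0): A^2
  · refine ⟨A^2, by rw [map_pow, pow_zero, mul_one], 1, w, w^2, h1w, h1w2, hww2, ?_, ?_, ?_⟩
    · exact eig_of _ _ ![1, 1*1, 1^2] 0 rfl (by rw [hA2]; exact cyc2 1 1 1 (by ring) hone3)
    · exact eig_of _ _ ![1, 1*w, w^2] 0 rfl (by rw [hA2]; exact cyc2 1 1 w (by ring) hw3)
    · exact eig_of _ _ ![1, 1*w^2, (w^2)^2] 0 rfl (by rw [hA2]; exact cyc2 1 1 (w^2) (by ring) hw23)
  -- (2,1): A^2*B
  · refine ⟨A^2*B, by rw [_root_.map_mul, map_pow, pow_one], 1, w, w^2, h1w, h1w2, hww2, ?_, ?_, ?_⟩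
    · exact eig_of _ _ ![1, w^2*1, 1^2] 0 rfl (by rw [hA2B]; exact cyc2 w (w^2) 1 hq1 hone3)
    · exact eig_of _ _ ![1, w^2*w, w^2] 0 rfl (by rw [hA2B]; exact cyc2 w (w^2) w hq1 hw3)
    · exact eig_of _ _ ![1, w^2*w^2, (w^2)^2] 0 rfl (by rw [hA2B]; exact cyc2 w (w^2) (w^2) hq1 hw23)
  -- (2,2): A^2*B^2
  · refine ⟨A^2*B^2, by rw [_root_.map_mul, map_pow, map_pow], 1, w, w^2, h1w, h1w2, hww2, ?_, ?_, ?_⟩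
    · exact eig_of _ _ ![1, w*1, 1^2] 0 rfl (by rw [hA2B2]; exact cyc2 (w^2) w 1 hq2 hone3)
    · exact eig_of _ _ ![1, w*w, w^2] 0 rfl (by rw [hA2B2]; exact cyc2 (w^2) w w hq2 hw3)
    · exact eig_of _ _ ![1, w*w^2, (w^2)^2] 0 rfl (by rw [hA2B2]; exact cyc2 (w^2) w (w^2) hq2 hw23)
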